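/- If |a| > 1 and (x_{-1}, x_0) is an admissible initial condition with α := b x_{-1} x_0 ≠ 1 - a, then the solution of x_{n+1} = x_{n-1}/(a + b x_n x_{n-1}) converges to 0. -/

import Mathlib

theorem stmt_11 (a b : ℝ) (x : ℤ → ℝ) (α : ℝ)
    (ha : 1 < |a|)
    (halpha : α = b * x (-1) * x 0)
    (hadm : ∀ n : ℕ, 1 ≤ n → α ≠ a ^ n * (a - 1) / (1 - a ^ n))
    (hα : α ≠ 1 - a)
    (hrec : ∀ n : ℕ, x ((n : ℤ) + 1) = x ((n : ℤ) - 1) / (a + b * x (n : ℤ) * x ((n : ℤ) - 1))) :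
    Filter.Tendsto (fun n : ℕ => x (n : ℤ)) Filter.atTop (nhds 0) := by
  have ha0 : (0:ℝ) < |a| := lt_trans one_pos ha
  have ha1 : a - 1 ≠ 0 := by
    intro h
    have : a = 1 := by linarith
    rw [this] at ha; simp at ha
  set y : ℕ → ℝ := fun n => b * x (n:ℤ) * x ((n:ℤ) - 1) with hy
  have hy0 : y 0 = α := by
    simp only [hy, halpha]
    norm_num
    ring
  have hystep : ∀ n : ℕ, y (n+1) = y n / (a + y n) := by
    intro n
    have h := hrec n
    simp only [hy]
    push_cast
    rw [show ((n:ℤ) + 1 - 1) = (n:ℤ) by ring, h]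
    ring
  set c : ℝ := a - 1 + α with hc
  have hcne : c ≠ 0 := by
    intro h
    apply hα
    have : a - 1 + α = 0 := h
    linarith
  set D : ℕ → ℝ := fun n => a ^ n * c - α with hD
  have hDne : ∀ n, D n ≠ 0 := by
    intro n
    rcases Nat.eq_zero_or_pos n with h0 | h1
    · subst h0
      simp only [hD, pow_zero, one_mul, hc]
      intro h
      exact ha1 (by linarith)
    · intro h
      have hpow : (1:ℝ) < |a| ^ n := one_lt_pow₀ ha (by omega)
      have hpow' : a ^ n ≠ 1 := by
        intro he
        rw [← abs_pow, he] at hpow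
        simp at hpow
      have h1a : 1 - a ^ n ≠ 0 := by
        intro he
        exact hpow' (by linarith)
      apply hadm n h1
      rw [eq_div_iff h1a]
      simp only [hD] at h
      simp only [hc] at h
      linear_combination -h
  have hform : ∀ n, y n = α * (a - 1) / D n := by
    intro n
    induction n with
    | zero =>
      rw [hy0]
      simp only [hD, pow_zero, one_mul, hc]
      rw [show a - 1 + α - α = a - 1 by ring]
      rw [mul_div_assoc, div_self ha1, mul_one]
    | succ n ih =>
      rw [hystep n, ih]
      have h1 := hDne n
      have h2 := hDne (n+1)
      have hden : a + α * (a - 1) / D n = D (n+1) / D n := by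
        rw [eq_div_iff h1]
        simp only [hD, hc] at h1 ⊢
        field_simp
        ring
      rw [hden]
      field_simp
  -- |D n| → ∞
  have hDtop : Filter.Tendsto (fun n => |D n|) Filter.atTop Filter.atTop := by
    have hmul : Filter.Tendsto (fun n : ℕ => |a| ^ n * |c|) Filter.atTop Filter.atTop :=
      (tendsto_pow_atTop_atTop_of_one_lt ha).atTop_mul_const (abs_pos.mpr hcne)
    have hsub : Filter.Tendsto (fun n : ℕ => |a| ^ n * |c| - |α|) Filter.atTop Filter.atTop :=
      Filter.tendsto_atTop_add_const_right _ (-|α|) hmul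
    apply Filter.tendsto_atTop_mono _ hsub
    intro n
    have h1 : |a ^ n * c| - |α| ≤ |a ^ n * c - α| := abs_sub_abs_le_abs_sub _ _
    rw [abs_mul, abs_pow] at h1
    simpa only [hD] using h1
  have hytends : Filter.Tendsto y Filter.atTop (nhds 0) := by
    refine squeeze_zero_norm (a := fun n => |α * (a - 1)| / |D n|) ?_
      (Filter.Tendsto.div_atTop tendsto_const_nhds hDtop)
    intro n
    rw [hform n, Real.norm_eq_abs, abs_div]
  set r : ℝ := (|a| + 1) / 2 with hrdef
  have hr1 : 1 < r := by rw [hrdef]; linarith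
  have hr0 : 0 < r := by linarith
  obtain ⟨N, hN⟩ := (Metric.tendsto_atTop.mp hytends) ((|a| - 1) / 2) (by linarith)
  have hay : ∀ n, N ≤ n → r ≤ |a + y n| := by
    intro n hn
    have h := hN n hn
    rw [Real.dist_eq, sub_zero] at h
    have htri : |a| ≤ |a + y n| + |y n| := by
      calc |a| = |(a + y n) + (-(y n))| := by ring_nf
        _ ≤ |a + y n| + |-(y n)| := abs_add_le _ _
        _ = |a + y n| + |y n| := by rw [abs_neg]
    rw [hrdef]
    linarith
  set M : ℝ := max |x (N:ℤ)| |x ((N:ℤ) + 1)| with hM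
  have hM0 : 0 ≤ M := le_trans (abs_nonneg _) (le_max_left _ _)
  have hkey : ∀ m : ℕ, |x ((N + m : ℕ) : ℤ)| ≤ M / r ^ (m / 2) := by
    intro m
    induction m using Nat.twoStepInduction with
    | zero =>
      simp only [Nat.add_zero, Nat.zero_div, pow_zero, div_one]
      exact le_max_left _ _
    | one =>
      norm_num
      exact le_max_right _ _
    | more m ih _ =>
      have hrecm := hrec (N + m + 1)
      have hcast1 : ((N + m + 1 : ℕ) : ℤ) + 1 = ((N + (m + 2) : ℕ) : ℤ) := by push_cast; ring
      have hcast2 : ((N + m + 1 : ℕ) : ℤ) - 1 = ((N + m : ℕ) : ℤ) := by push_cast; ring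
      rw [hcast1, hcast2] at hrecm
      have hyval : a + b * x ((N + m + 1 : ℕ) : ℤ) * x (((N + m + 1 : ℕ) : ℤ) - 1)
          = a + y (N + m + 1) := by
        simp only [hy]
      rw [hcast2] at hyval
      rw [hyval] at hrecm
      have hge : r ≤ |a + y (N + m + 1)| := hay _ (by omega)
      have hdiv2 : (m + 2) / 2 = m / 2 + 1 := by omega
      calc |x ((N + (m + 2) : ℕ) : ℤ)|
          = |x ((N + m : ℕ) : ℤ)| / |a + y (N + m + 1)| := by rw [hrecm, abs_div]
        _ ≤ |x ((N + m : ℕ) : ℤ)| / r := by gcongr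
        _ ≤ (M / r ^ (m / 2)) / r := by gcongr
        _ = M / r ^ ((m + 2) / 2) := by
            rw [hdiv2, div_div, pow_succ]
  have hdiv2top : Filter.Tendsto (fun m : ℕ => m / 2) Filter.atTop Filter.atTop := by
    apply Filter.tendsto_atTop_atTop.mpr
    intro bb
    exact ⟨2 * bb, fun n hn => by omega⟩
  have hpowtop : Filter.Tendsto (fun m : ℕ => r ^ (m / 2)) Filter.atTop Filter.atTop :=
    (tendsto_pow_atTop_atTop_of_one_lt hr1).comp hdiv2top
  have hbound : Filter.Tendsto (fun m : ℕ => M / r ^ (m / 2)) Filter.atTop (nhds 0) :=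
    Filter.Tendsto.div_atTop tendsto_const_nhds hpowtop
  have hshift : Filter.Tendsto (fun m : ℕ => x ((N + m : ℕ) : ℤ)) Filter.atTop (nhds 0) := by
    refine squeeze_zero_norm (fun m => ?_) hbound
    rw [Real.norm_eq_abs]
    exact hkey m
  rw [← Filter.tendsto_add_atTop_iff_nat (f := fun n : ℕ => x (n : ℤ)) N]
  convert hshift using 3 with m
  omega
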